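/- Let K = ℂ(t) be the field of rational functions over ℂ, and let W be the Weierstrass curve over K with coefficients a₁ = 0, a₂ = 0, a₃ = t, a₄ = 0, a₆ = 0, i.e. the curve y² + ty = x³. Then (0, 0) is a nonsingular point of W, and the corresponding point in the group of K-rational points of W has order exactly 3 (it is nonzero and 3·(0,0) = 0). -/

import Mathlib

open WeierstrassCurve.Affine

private lemma some_congr {F : Type*} [Field F] {W : WeierstrassCurve.Affine F}
    {x₁ y₁ x₂ y₂ : F} (hx : x₁ = x₂) (hy : y₁ = y₂) (h₁ : W.Nonsingular x₁ y₁)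
    (h₂ : W.Nonsingular x₂ y₂) : Point.some _ _ h₁ = Point.some _ _ h₂ := by
  subst hx; subst hy; rfl

open Classical in
/-- The rational elliptic surface `X_{4,4} : y² + ty = x³` over `ℂ(t)` has a `3`-torsion section
at `(0, 0)`: the point `(0, 0)` is nonsingular, nonzero, and is killed by `3` in the group of
`ℂ(t)`-rational points. -/
theorem X44_three_torsion_section
    (W : WeierstrassCurve.Affine (RatFunc ℂ))
    (hW : W = { a₁ := 0, a₂ := 0, a₃ := RatFunc.X, a₄ := 0, a₆ := 0 }) :
    ∃ h : W.Nonsingular 0 0,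
      WeierstrassCurve.Affine.Point.some _ _ h ≠ 0 ∧
      3 • WeierstrassCurve.Affine.Point.some _ _ h = 0 := by
  subst hW
  set W : WeierstrassCurve.Affine (RatFunc ℂ) :=
    { a₁ := 0, a₂ := 0, a₃ := RatFunc.X, a₄ := 0, a₆ := 0 } with hWdef
  have ht : (RatFunc.X : RatFunc ℂ) ≠ 0 := RatFunc.X_ne_zero
  have h : W.Nonsingular 0 0 := by
    rw [nonsingular_zero]
    exact ⟨rfl, Or.inl ht⟩
  have h2 : W.Nonsingular 0 (-RatFunc.X) := by
    rw [nonsingular_iff', equation_iff]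
    constructor
    · simp [hWdef]; ring
    · right; simp only [hWdef]
      have : -(2 * RatFunc.X) + RatFunc.X = -(RatFunc.X : RatFunc ℂ) := by ring
      simp only [mul_zero, add_zero, zero_mul]
      intro hc
      exact ht (by linear_combination -hc)
  have hy : (0 : RatFunc ℂ) ≠ W.negY 0 0 := by
    simp [negY, hWdef, ht, eq_comm]
  have hadd : Point.some _ _ h + Point.some _ _ h = Point.some _ _ h2 := by
    rw [Point.add_self_of_Y_ne hy]
    apply some_congr
    · rw [slope_of_Y_ne rfl hy]; simp [addX, negY, hWdef]
    · rw [slope_of_Y_ne rfl hy]; simp [addY, negAddY, addX, negY, hWdef]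
  refine ⟨h, ?_, ?_⟩
  · exact fun hc => (Point.some_ne_zero h) hc
  · have h3 : (3 : ℕ) • Point.some _ _ h = Point.some _ _ h + Point.some _ _ h + Point.some _ _ h := by
      rw [succ_nsmul, two_nsmul]
    rw [h3, hadd]
    exact Point.add_of_Y_eq rfl (by simp [negY, hWdef])
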